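/- The map θ : {x ∈ S² : x₁ > 0} × S¹ → ℝ⁴ defined by θ((x₁,x₂,x₃),(y₁,y₂)) = (x₂, x₃, y₁·√(2 − x₂² − x₃²), y₂·√(2 − x₂² − x₃²))/√2 takes values in S³, is a topological embedding, and its image equals the open subset {z ∈ S³ : z₁² + z₂² < 1/2} of S³. -/

import Mathlib

/- STATEMENT 2: The map θ : {x ∈ S² : x₁ > 0} × S¹ → ℝ⁴,
   θ((x₁,x₂,x₃),(y₁,y₂)) = (x₂, x₃, y₁√(2−x₂²−x₃²), y₂√(2−x₂²−x₃²))/√2,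
   takes values in S³, is a topological embedding, and its image equals the
   open subset {z ∈ S³ : z₁² + z₂² < 1/2} of S³. -/

noncomputable section

abbrev E (n : ℕ) : Type := EuclideanSpace ℝ (Fin n)

def theta (x : E 3) (y : E 2) : E 4 :=
  (Real.sqrt 2)⁻¹ •
    ((WithLp.equiv 2 (Fin 4 → ℝ)).symm
      ![x 1, x 2,
        y 0 * Real.sqrt (2 - (x 1 ^ 2 + x 2 ^ 2)),
        y 1 * Real.sqrt (2 - (x 1 ^ 2 + x 2 ^ 2))])

/-- The open upper hemisphere `Int D²₊` of `S²`. -/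
def upperHemisphere : Set (E 3) :=
  {x | x ∈ Metric.sphere (0 : E 3) 1 ∧ 0 < x 0}

lemma sphere4 (z : E 4) : z ∈ Metric.sphere (0 : E 4) 1 ↔ z 0^2 + z 1^2 + z 2^2 + z 3^2 = 1 := by
  rw [mem_sphere_zero_iff_norm, ← Real.sqrt_one, EuclideanSpace.norm_eq]
  rw [Real.sqrt_one, Real.sqrt_eq_one]
  simp [Fin.sum_univ_four, sq_abs]

lemma sphere3 (z : E 3) : z ∈ Metric.sphere (0 : E 3) 1 ↔ z 0^2 + z 1^2 + z 2^2 = 1 := by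
  rw [mem_sphere_zero_iff_norm, ← Real.sqrt_one, EuclideanSpace.norm_eq]
  rw [Real.sqrt_one, Real.sqrt_eq_one]
  simp [Fin.sum_univ_three, sq_abs]

lemma sphere2 (z : E 2) : z ∈ Metric.sphere (0 : E 2) 1 ↔ z 0^2 + z 1^2 = 1 := by
  rw [mem_sphere_zero_iff_norm, ← Real.sqrt_one, EuclideanSpace.norm_eq]
  rw [Real.sqrt_one, Real.sqrt_eq_one]
  simp [Fin.sum_univ_two, sq_abs]

lemma theta_apply0 (x : E 3) (y : E 2) : theta x y 0 = (Real.sqrt 2)⁻¹ * x 1 := by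
  simp [theta]
lemma theta_apply1 (x : E 3) (y : E 2) : theta x y 1 = (Real.sqrt 2)⁻¹ * x 2 := by
  simp [theta]
lemma theta_apply2 (x : E 3) (y : E 2) :
    theta x y 2 = (Real.sqrt 2)⁻¹ * (y 0 * Real.sqrt (2 - (x 1 ^ 2 + x 2 ^ 2))) := by
  simp [theta]
lemma theta_apply3 (x : E 3) (y : E 2) :
    theta x y 3 = (Real.sqrt 2)⁻¹ * (y 1 * Real.sqrt (2 - (x 1 ^ 2 + x 2 ^ 2))) := by
  simp [theta]

lemma sq_sqrt2 : (Real.sqrt 2) ^ 2 = 2 := Real.sq_sqrt (by norm_num)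
lemma sqrt2_pos : 0 < Real.sqrt 2 := Real.sqrt_pos.mpr (by norm_num)
lemma inv_sqrt2_sq : ((Real.sqrt 2)⁻¹) ^ 2 = 1/2 := by
  rw [inv_pow, sq_sqrt2]; norm_num

lemma theta_mem (x : E 3) (y : E 2) (hx : x ∈ upperHemisphere)
    (hy : y ∈ Metric.sphere (0 : E 2) 1) :
    theta x y ∈ Metric.sphere (0 : E 4) 1 ∧ theta x y 0 ^ 2 + theta x y 1 ^ 2 < 1/2 := by
  obtain ⟨hx1, hx0⟩ := hx
  rw [sphere3] at hx1
  rw [sphere2] at hy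
  have h2 : 2 - (x 1 ^ 2 + x 2 ^ 2) = 1 + x 0 ^ 2 := by linarith
  have hs : Real.sqrt (2 - (x 1 ^ 2 + x 2 ^ 2)) ^ 2 = 1 + x 0 ^ 2 := by
    rw [Real.sq_sqrt (by nlinarith), h2]
  constructor
  · rw [sphere4, theta_apply0, theta_apply1, theta_apply2, theta_apply3]
    have : ∀ a : ℝ, ((Real.sqrt 2)⁻¹ * a) ^ 2 = 1/2 * a ^ 2 := by
      intro a; rw [mul_pow, inv_sqrt2_sq]
    rw [this, this, this, this, mul_pow, mul_pow, hs]
    nlinarith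
  · rw [theta_apply0, theta_apply1, mul_pow, mul_pow, inv_sqrt2_sq]
    nlinarith

def gmap (z : E 4) : E 3 × E 2 :=
  ((WithLp.equiv 2 (Fin 3 → ℝ)).symm
      ![Real.sqrt (1 - 2 * (z 0 ^ 2 + z 1 ^ 2)), Real.sqrt 2 * z 0, Real.sqrt 2 * z 1],
   (WithLp.equiv 2 (Fin 2 → ℝ)).symm
      ![z 2 / Real.sqrt (max (1 - (z 0 ^ 2 + z 1 ^ 2)) (1/2)),
        z 3 / Real.sqrt (max (1 - (z 0 ^ 2 + z 1 ^ 2)) (1/2))])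

lemma gmap_cont : Continuous gmap := by
  have hc : ∀ i : Fin 4, Continuous (fun z : E 4 => z i) := fun i =>
    (EuclideanSpace.proj i).continuous
  have hden : Continuous fun z : E 4 =>
      Real.sqrt (max (1 - (z 0 ^ 2 + z 1 ^ 2)) (1/2)) := by
    fun_prop
  have hden_ne : ∀ z : E 4, Real.sqrt (max (1 - (z 0 ^ 2 + z 1 ^ 2)) (1/2)) ≠ 0 := by
    intro z
    refine ne_of_gt (Real.sqrt_pos.mpr ?_)
    exact lt_max_of_lt_right (by norm_num)
  apply Continuous.prodMk
  · refine (PiLp.continuous_toLp 2 (fun _ : Fin 3 => ℝ)).comp ?_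
    refine continuous_pi ?_
    intro i
    fin_cases i <;> simp <;> fun_prop
  · refine (PiLp.continuous_toLp 2 (fun _ : Fin 2 => ℝ)).comp ?_
    refine continuous_pi ?_
    intro i
    fin_cases i <;> simp only [Matrix.cons_val_zero, Matrix.cons_val_one, Matrix.head_cons] <;>
      exact ((hc _).div hden hden_ne)

lemma gmap_theta (x : E 3) (y : E 2) (hx : x ∈ upperHemisphere)
    (_hy : y ∈ Metric.sphere (0 : E 2) 1) : gmap (theta x y) = (x, y) := by
  obtain ⟨hx1, hx0⟩ := hx
  rw [sphere3] at hx1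
  set s := Real.sqrt (2 - (x 1 ^ 2 + x 2 ^ 2)) with hs_def
  have h2 : 2 - (x 1 ^ 2 + x 2 ^ 2) = 1 + x 0 ^ 2 := by linarith
  have hsq : s ^ 2 = 1 + x 0 ^ 2 := by rw [hs_def, Real.sq_sqrt (by nlinarith), h2]
  have hs_pos : 0 < s := by
    rw [hs_def]; exact Real.sqrt_pos.mpr (by nlinarith)
  have ha : theta x y 0 ^ 2 + theta x y 1 ^ 2 = (x 1 ^ 2 + x 2 ^ 2) / 2 := by
    rw [theta_apply0, theta_apply1, mul_pow, mul_pow, inv_sqrt2_sq]; ring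
  have hden : Real.sqrt (max (1 - (theta x y 0 ^ 2 + theta x y 1 ^ 2)) (1/2))
      = s / Real.sqrt 2 := by
    rw [ha]
    have : max (1 - (x 1 ^ 2 + x 2 ^ 2) / 2) (1/2) = (2 - (x 1 ^ 2 + x 2 ^ 2)) / 2 := by
      rw [max_eq_left (by nlinarith)]; ring
    rw [this, Real.sqrt_div (by nlinarith), hs_def]
  have h2ne : Real.sqrt 2 ≠ 0 := ne_of_gt sqrt2_pos
  refine Prod.ext ?_ ?_
  · ext i
    fin_cases i
    · show Real.sqrt (1 - 2 * (theta x y 0 ^ 2 + theta x y 1 ^ 2)) = x 0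
      rw [ha]
      have : 1 - 2 * ((x 1 ^ 2 + x 2 ^ 2) / 2) = x 0 ^ 2 := by linarith
      rw [this, Real.sqrt_sq hx0.le]
    · show Real.sqrt 2 * theta x y 0 = x 1
      rw [theta_apply0]; field_simp
    · show Real.sqrt 2 * theta x y 1 = x 2
      rw [theta_apply1]; field_simp
  · ext i
    fin_cases i
    · show theta x y 2 / _ = y 0
      rw [hden, theta_apply2]
      field_simp
      rw [hs_def]
    · show theta x y 3 / _ = y 1
      rw [hden, theta_apply3]
      field_simp
      rw [hs_def]

lemma theta_cont : Continuous (fun q : E 3 × E 2 => theta q.1 q.2) := by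
  have hc3 : ∀ i : Fin 3, Continuous (fun q : E 3 × E 2 => q.1 i) := fun i =>
    (EuclideanSpace.proj i).continuous.comp continuous_fst
  have hc2 : ∀ i : Fin 2, Continuous (fun q : E 3 × E 2 => q.2 i) := fun i =>
    (EuclideanSpace.proj i).continuous.comp continuous_snd
  unfold theta
  refine Continuous.fun_const_smul ?_ _
  refine (PiLp.continuous_toLp 2 (fun _ : Fin 4 => ℝ)).comp ?_
  refine continuous_pi ?_
  intro i
  fin_cases i <;>
    simp only [Matrix.cons_val_zero, Matrix.cons_val_one, Matrix.head_cons,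
      Matrix.cons_val_two, Matrix.tail_cons, Matrix.cons_val_three] <;>
  · first
    | exact hc3 1
    | exact hc3 2
    | exact Continuous.mul (by fun_prop) (Real.continuous_sqrt.comp (by fun_prop))

lemma gmap_fst0 (z : E 4) : (gmap z).1 0 = Real.sqrt (1 - 2 * (z 0 ^ 2 + z 1 ^ 2)) := by
  simp [gmap]
lemma gmap_fst1 (z : E 4) : (gmap z).1 1 = Real.sqrt 2 * z 0 := by simp [gmap]
lemma gmap_fst2 (z : E 4) : (gmap z).1 2 = Real.sqrt 2 * z 1 := by simp [gmap]
lemma gmap_snd0 (z : E 4) :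
    (gmap z).2 0 = z 2 / Real.sqrt (max (1 - (z 0 ^ 2 + z 1 ^ 2)) (1/2)) := by simp [gmap]
lemma gmap_snd1 (z : E 4) :
    (gmap z).2 1 = z 3 / Real.sqrt (max (1 - (z 0 ^ 2 + z 1 ^ 2)) (1/2)) := by simp [gmap]

lemma theta_gmap (z : E 4) (hz1 : z 0^2 + z 1^2 + z 2^2 + z 3^2 = 1)
    (hz2 : z 0 ^ 2 + z 1 ^ 2 < 1/2) :
    (gmap z).1 ∈ upperHemisphere ∧ (gmap z).2 ∈ Metric.sphere (0 : E 2) 1 ∧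
      theta (gmap z).1 (gmap z).2 = z := by
  have h1a : (0:ℝ) < 1 - (z 0 ^ 2 + z 1 ^ 2) := by linarith
  have hmax : max (1 - (z 0 ^ 2 + z 1 ^ 2)) (1/2) = 1 - (z 0 ^ 2 + z 1 ^ 2) :=
    max_eq_left (by linarith)
  have hr : 0 < Real.sqrt (1 - (z 0 ^ 2 + z 1 ^ 2)) := Real.sqrt_pos.mpr h1a
  have hrsq : Real.sqrt (1 - (z 0 ^ 2 + z 1 ^ 2)) ^ 2 = 1 - (z 0 ^ 2 + z 1 ^ 2) :=
    Real.sq_sqrt h1a.le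
  have h2ne : Real.sqrt 2 ≠ 0 := ne_of_gt sqrt2_pos
  have hkey : 2 - (((gmap z).1) 1 ^ 2 + ((gmap z).1) 2 ^ 2)
      = 2 * (1 - (z 0 ^ 2 + z 1 ^ 2)) := by
    rw [gmap_fst1, gmap_fst2, mul_pow, mul_pow, sq_sqrt2]; ring
  refine ⟨⟨?_, ?_⟩, ?_, ?_⟩
  · rw [sphere3, gmap_fst0, gmap_fst1, gmap_fst2, Real.sq_sqrt (by linarith),
      mul_pow, mul_pow, sq_sqrt2]
    ring
  · rw [gmap_fst0]; exact Real.sqrt_pos.mpr (by linarith)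
  · rw [sphere2, gmap_snd0, gmap_snd1, hmax, div_pow, div_pow, hrsq]
    field_simp
    linarith
  · ext i
    fin_cases i
    · show theta _ _ 0 = z 0
      rw [theta_apply0, gmap_fst1]; field_simp
    · show theta _ _ 1 = z 1
      rw [theta_apply1, gmap_fst2]; field_simp
    · show theta _ _ 2 = z 2
      rw [theta_apply2, gmap_snd0, hkey, hmax, Real.sqrt_mul (by norm_num)]
      field_simp
    · show theta _ _ 3 = z 3
      rw [theta_apply3, gmap_snd1, hkey, hmax, Real.sqrt_mul (by norm_num)]
      field_simp

theorem statement2 :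
    (∀ p : upperHemisphere × (Metric.sphere (0 : E 2) 1),
        theta p.1 p.2 ∈ Metric.sphere (0 : E 4) 1) ∧
    Topology.IsEmbedding
      (fun p : upperHemisphere × (Metric.sphere (0 : E 2) 1) => theta p.1 p.2) ∧
    Set.range
      (fun p : upperHemisphere × (Metric.sphere (0 : E 2) 1) => theta p.1 p.2)
      = {z : E 4 | z ∈ Metric.sphere (0 : E 4) 1 ∧ z 0 ^ 2 + z 1 ^ 2 < 1 / 2} := by
  refine ⟨fun p => (theta_mem _ _ p.1.2 p.2.2).1, ?_, ?_⟩
  · refine Topology.IsEmbedding.of_comp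
      (theta_cont.comp (continuous_subtype_val.prodMap continuous_subtype_val))
      gmap_cont ?_
    have heq : (gmap ∘ fun p : upperHemisphere × (Metric.sphere (0 : E 2) 1) =>
        theta p.1 p.2) = fun p => ((p.1 : E 3), (p.2 : E 2)) :=
      funext fun p => gmap_theta _ _ p.1.2 p.2.2
    rw [heq]
    exact Topology.IsEmbedding.subtypeVal.prodMap Topology.IsEmbedding.subtypeVal
  · ext z
    simp only [Set.mem_range, Set.mem_setOf_eq]
    constructor
    · rintro ⟨p, rfl⟩
      exact theta_mem _ _ p.1.2 p.2.2
    · rintro ⟨hz1, hz2⟩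
      rw [sphere4] at hz1
      obtain ⟨hxm, hym, heq⟩ := theta_gmap z hz1 hz2
      exact ⟨(⟨(gmap z).1, hxm⟩, ⟨(gmap z).2, hym⟩), heq⟩
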